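/- Let γ > |β| ≥ 0, δ > 0, μ ∈ ℝ, and let f(x) = (√(γ²-β²)/(2γδ K₁(δ√(γ²-β²)))) exp(-γ√(δ²+(x-μ)²) + β(x-μ)) be the hyperbolic density. Then for α > 0, ∫_{ℝ} f(x)^α dx = (√(γ²-β²)/(2γδ))^{α-1} K₁(αδ√(γ²-β²)) / K₁(δ√(γ²-β²))^α, and hence for α ≠ 1 the Rényi information equals -log(√(γ²-β²)/(2γδ)) + (1/(1-α)) log( K₁(αδ√(γ²-β²)) / K₁(δ√(γ²-β²))^α ). -/

import Mathlib

open Real MeasureTheory Set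

/-- The modified Bessel function of the third kind of order 1. -/
noncomputable def besselK1 (x : ℝ) : ℝ :=
  (1/2) * ∫ u in Set.Ioi (0:ℝ), Real.exp (-(x/2) * (u + u⁻¹)) * u ^ (-2 : ℝ)

lemma besselK1_eq (x : ℝ) : besselK1 x =
    (1/2) * ∫ u in Set.Ioi (0:ℝ), Real.exp (-(x/2) * (u + u⁻¹)) * (u^2)⁻¹ := by
  unfold besselK1
  congr 1
  apply MeasureTheory.setIntegral_congr_fun measurableSet_Ioi
  intro u hu
  simp only []
  rw [show (-2:ℝ) = -(2:ℕ) by norm_num, Real.rpow_neg (le_of_lt hu), Real.rpow_natCast]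

lemma meas0 (c : ℝ) : Measurable (fun u : ℝ => Real.exp (-c * (u + u⁻¹))) :=
  Measurable.exp (Measurable.const_mul (Measurable.add measurable_id measurable_inv) (-c))

lemma meas2 (c : ℝ) : Measurable (fun u : ℝ => Real.exp (-c * (u + u⁻¹)) * (u^2)⁻¹) :=
  Measurable.mul (meas0 c) (Measurable.inv (Measurable.pow_const measurable_id 2))

lemma integ0 {c : ℝ} (hc : 0 < c) :
    IntegrableOn (fun u : ℝ => Real.exp (-c * (u + u⁻¹))) (Ioi 0) := by
  rw [show Ioi (0:ℝ) = Ioc 0 1 ∪ Ioi 1 by rw [Ioc_union_Ioi_eq_Ioi]; norm_num]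
  refine IntegrableOn.union ?_ ?_
  · refine Integrable.mono' (integrable_const 1) (meas0 c).aestronglyMeasurable.restrict ?_
    filter_upwards [ae_restrict_mem measurableSet_Ioc] with u hu
    rw [Real.norm_eq_abs, Real.abs_exp]
    refine Real.exp_le_one_iff.2 ?_
    have h1 : 0 < u := hu.1
    have : 0 ≤ u + u⁻¹ := by positivity
    nlinarith
  · refine Integrable.mono' (exp_neg_integrableOn_Ioi 1 hc) (meas0 c).aestronglyMeasurable.restrict ?_
    filter_upwards [ae_restrict_mem measurableSet_Ioi] with u hu
    rw [Real.norm_eq_abs, Real.abs_exp, Real.exp_le_exp]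
    have h1 : (0:ℝ) < u := lt_trans one_pos hu
    have : 0 < u⁻¹ := by positivity
    nlinarith

lemma integ2 {c : ℝ} (hc : 0 < c) :
    IntegrableOn (fun u : ℝ => Real.exp (-c * (u + u⁻¹)) * (u^2)⁻¹) (Ioi 0) := by
  rw [show Ioi (0:ℝ) = Ioc 0 1 ∪ Ioi 1 by rw [Ioc_union_Ioi_eq_Ioi]; norm_num]
  refine IntegrableOn.union ?_ ?_
  · refine Integrable.mono' (integrable_const (4/c^2)) (meas2 c).aestronglyMeasurable.restrict ?_
    filter_upwards [ae_restrict_mem measurableSet_Ioc] with u hu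
    have h1 : 0 < u := hu.1
    rw [Real.norm_eq_abs, abs_mul, Real.abs_exp, abs_of_pos (by positivity : (0:ℝ) < (u^2)⁻¹)]
    have key : Real.exp (-c * (u + u⁻¹)) ≤ 4 * u^2 / c^2 := by
      have h2 : c^2/(4*u^2) ≤ Real.exp (c * (u + u⁻¹)) := by
        have hx : 2 * (c/(2*u)) ≤ c * (u + u⁻¹) := by
          have he : 2 * (c/(2*u)) = c * u⁻¹ := by field_simp
          rw [he]
          have : 0 ≤ c * u := by positivity
          nlinarith
        calc c^2/(4*u^2) = (c/(2*u))^2 := by ring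
        _ ≤ (1 + c/(2*u))^2 := by nlinarith [div_pos hc (by positivity : (0:ℝ) < 2*u)]
        _ ≤ (Real.exp (c/(2*u)))^2 := by
            have h3 := Real.add_one_le_exp (c/(2*u))
            have h0' : (0:ℝ) < 1 + c/(2*u) := by positivity
            nlinarith [Real.exp_pos (c/(2*u))]
        _ = Real.exp (2 * (c/(2*u))) := by rw [sq, ← Real.exp_add]; ring_nf
        _ ≤ Real.exp (c * (u + u⁻¹)) := Real.exp_le_exp.2 hx
      rw [show -c * (u+u⁻¹) = -(c*(u+u⁻¹)) by ring, Real.exp_neg,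
        inv_le_comm₀ (Real.exp_pos _) (by positivity)]
      calc (4*u^2/c^2)⁻¹ = c^2/(4*u^2) := by rw [inv_div]
      _ ≤ Real.exp (c * (u + u⁻¹)) := h2
    calc Real.exp (-c * (u + u⁻¹)) * (u^2)⁻¹ ≤ (4*u^2/c^2) * (u^2)⁻¹ := by
          have : (0:ℝ) ≤ (u^2)⁻¹ := by positivity
          nlinarith
    _ = 4/c^2 * (u^2 * (u^2)⁻¹) := by ring
    _ = 4/c^2 := by rw [mul_inv_cancel₀ (by positivity)]; ring
  · refine Integrable.mono' (exp_neg_integrableOn_Ioi 1 hc) (meas2 c).aestronglyMeasurable.restrict ?_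
    filter_upwards [ae_restrict_mem measurableSet_Ioi] with u hu
    have h1 : (1:ℝ) < u := hu
    have h0 : (0:ℝ) < u := lt_trans one_pos h1
    rw [Real.norm_eq_abs, abs_mul, Real.abs_exp, abs_of_pos (by positivity : (0:ℝ) < (u^2)⁻¹)]
    have e1 : Real.exp (-c * (u + u⁻¹)) ≤ Real.exp (-c * u) := by
      rw [Real.exp_le_exp]
      have : 0 < u⁻¹ := by positivity
      nlinarith
    have e2 : (u^2)⁻¹ ≤ 1 := by
      rw [inv_le_one_iff₀]; right; nlinarith
    nlinarith [Real.exp_pos (-c*u), Real.exp_pos (-c*(u+u⁻¹)), inv_pos.2 (pow_pos h0 2)]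

lemma kernel_symm {c : ℝ} (hc : 0 < c) :
    ∫ u in Ioi (0:ℝ), Real.exp (-c * (u + u⁻¹)) * (u^2)⁻¹
      = ∫ u in Ioi (0:ℝ), Real.exp (-c * (u + u⁻¹)) := by
  have himg : (fun u : ℝ => u⁻¹) '' (Ioi 0) = Ioi 0 := by
    ext y
    constructor
    · rintro ⟨x, hx, rfl⟩
      exact inv_pos.2 (show (0:ℝ) < x from hx)
    · intro hy
      exact ⟨y⁻¹, show (0:ℝ) < y⁻¹ from inv_pos.2 (show (0:ℝ) < y from hy), inv_inv y⟩
  have := integral_image_eq_integral_abs_deriv_smul (f := fun u : ℝ => u⁻¹)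
    (f' := fun u : ℝ => -(u^2)⁻¹) measurableSet_Ioi
    (fun x hx => (hasDerivAt_inv (ne_of_gt hx)).hasDerivWithinAt)
    (inv_injective.injOn) (fun u => Real.exp (-c * (u + u⁻¹)))
  rw [himg] at this
  rw [this]
  apply MeasureTheory.setIntegral_congr_fun measurableSet_Ioi
  intro u hu
  simp only [smul_eq_mul, abs_neg, abs_inv, abs_pow, abs_of_pos (show (0:ℝ) < u from hu), inv_inv]
  ring

lemma hyperbolic_integral {a b δ : ℝ} (hab : |b| < a) (hδ : 0 < δ) :
    ∫ y : ℝ, Real.exp (-a * Real.sqrt (δ^2 + y^2) + b * y)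
      = 2 * a * δ / Real.sqrt (a^2 - b^2) * besselK1 (δ * Real.sqrt (a^2 - b^2)) := by
  obtain ⟨hb1, hb2⟩ := abs_lt.1 hab
  have ha : 0 < a := lt_of_le_of_lt (abs_nonneg b) hab
  have hab2 : 0 < a^2 - b^2 := by nlinarith
  have hapb : 0 < a + b := by linarith
  have hamb : 0 < a - b := by linarith
  set r : ℝ := Real.sqrt (a^2 - b^2) with hrdef
  have hr : 0 < r := Real.sqrt_pos.2 hab2
  have hr2 : r^2 = a^2 - b^2 := Real.sq_sqrt hab2.le
  set φ : ℝ → ℝ := fun u => δ/(2*r) * ((a+b)*u - (a-b)*u⁻¹) with hφ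
  set φ' : ℝ → ℝ := fun u => δ/(2*r) * ((a+b) + (a-b)*(u^2)⁻¹) with hφ'
  have himg : φ '' Ioi 0 = univ := by
    apply eq_univ_of_forall
    intro y
    set s : ℝ := Real.sqrt (y^2 + δ^2) with hsdef
    have hs0 : 0 ≤ s := Real.sqrt_nonneg _
    have hs2 : s^2 = y^2 + δ^2 := Real.sq_sqrt (by positivity)
    have hw : 0 < y + s := by nlinarith
    have hwne : y + s ≠ 0 := ne_of_gt hw
    have hrne : r ≠ 0 := ne_of_gt hr
    have hδne : δ ≠ 0 := ne_of_gt hδ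
    have hapbne : a + b ≠ 0 := ne_of_gt hapb
    refine ⟨(y + s) * r / (δ * (a+b)), ?_, ?_⟩
    · exact div_pos (mul_pos hw hr) (mul_pos hδ hapb)
    · show δ/(2*r) * ((a+b)*((y + s) * r / (δ * (a+b))) - (a-b)*((y + s) * r / (δ * (a+b)))⁻¹) = y
      have e1 : (a+b)*((y + s) * r / (δ * (a+b))) = (y+s)*r/δ := by
        field_simp
      have e2 : (a-b)*((y + s) * r / (δ * (a+b)))⁻¹ = r*δ/(y+s) := by
        rw [inv_div]
        field_simp
        linear_combination (-1) * hr2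
      rw [e1, e2]
      field_simp
      linear_combination hs2
  have hsqrt : ∀ u : ℝ, 0 < u →
      Real.sqrt (δ^2 + (φ u)^2) = δ/(2*r) * ((a+b)*u + (a-b)*u⁻¹) := by
    intro u hu
    have hui : u * u⁻¹ = 1 := mul_inv_cancel₀ (ne_of_gt hu)
    have hune : u ≠ 0 := ne_of_gt hu
    have hrne : r ≠ 0 := ne_of_gt hr
    have hsq : δ^2 + (φ u)^2 = (δ/(2*r) * ((a+b)*u + (a-b)*u⁻¹))^2 := by
      show δ^2 + (δ/(2*r) * ((a+b)*u - (a-b)*u⁻¹))^2 = _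
      field_simp
      linear_combination (4*u^2) * hr2
    rw [hsq, Real.sqrt_sq ?_]
    have hi : 0 < u⁻¹ := inv_pos.2 hu
    have : 0 < (a+b)*u + (a-b)*u⁻¹ := by nlinarith
    positivity
  have hderiv : ∀ u ∈ Ioi (0:ℝ), HasDerivWithinAt φ (φ' u) (Ioi 0) u := by
    intro u hu
    have hne : u ≠ 0 := ne_of_gt hu
    have h2 := (((hasDerivAt_id u).const_mul (a+b)).sub
      ((hasDerivAt_inv hne).const_mul (a-b))).const_mul (δ/(2*r))
    have h3 : HasDerivAt φ (φ' u) u := by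
      convert h2 using 1
      show δ/(2*r) * ((a+b) + (a-b)*(u^2)⁻¹) = _
      ring
      all_goals rfl
    exact h3.hasDerivWithinAt
  have hinj : InjOn φ (Ioi 0) := by
    apply StrictMonoOn.injOn
    intro u hu v hv huv
    have hu0 : (0:ℝ) < u := hu
    have hv0 : (0:ℝ) < v := hv
    have hiv : v⁻¹ < u⁻¹ := by
      rw [inv_lt_inv₀ hv0 hu0]
      exact huv
    show δ/(2*r) * ((a+b)*u - (a-b)*u⁻¹) < δ/(2*r) * ((a+b)*v - (a-b)*v⁻¹)
    apply mul_lt_mul_of_pos_left _ (by positivity)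
    exact sub_lt_sub (by nlinarith) (by nlinarith)
  have key := integral_image_eq_integral_abs_deriv_smul measurableSet_Ioi hderiv hinj
    (fun y => Real.exp (-a * Real.sqrt (δ^2 + y^2) + b * y))
  rw [himg] at key
  have hL : ∫ y : ℝ, Real.exp (-a * Real.sqrt (δ^2 + y^2) + b * y)
      = ∫ y in univ, Real.exp (-a * Real.sqrt (δ^2 + y^2) + b * y) := by
    rw [Measure.restrict_univ]
  rw [hL, key]
  have hcongr : ∫ u in Ioi (0:ℝ), |φ' u| • Real.exp (-a * Real.sqrt (δ^2 + (φ u)^2) + b * (φ u))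
      = ∫ u in Ioi (0:ℝ), (δ/(2*r)*(a+b)) * Real.exp (-(δ*r/2) * (u + u⁻¹))
          + (δ/(2*r)*(a-b)) * (Real.exp (-(δ*r/2) * (u + u⁻¹)) * (u^2)⁻¹) := by
    apply MeasureTheory.setIntegral_congr_fun measurableSet_Ioi
    intro u hu
    simp only [smul_eq_mul]
    have hu0 : (0:ℝ) < u := hu
    have hune : u ≠ 0 := ne_of_gt hu0
    have hrne : r ≠ 0 := ne_of_gt hr
    have habs : |φ' u| = φ' u := abs_of_pos (by
      show 0 < δ/(2*r) * ((a+b) + (a-b)*(u^2)⁻¹)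
      have hi : (0:ℝ) < (u^2)⁻¹ := by positivity
      apply mul_pos (div_pos hδ (by positivity))
      nlinarith)
    rw [hsqrt u hu0]
    have hexp : -a * (δ/(2*r) * ((a+b)*u + (a-b)*u⁻¹)) + b * (φ u)
        = -(δ*r/2) * (u + u⁻¹) := by
      show -a * (δ/(2*r) * ((a+b)*u + (a-b)*u⁻¹))
          + b * (δ/(2*r) * ((a+b)*u - (a-b)*u⁻¹)) = -(δ*r/2) * (u + u⁻¹)
      field_simp
      linear_combination (1+u^2) * hr2
    rw [habs, hexp]
    show δ/(2*r) * ((a+b) + (a-b)*(u^2)⁻¹) * Real.exp (-(δ*r/2) * (u + u⁻¹)) = _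
    ring
  rw [hcongr]
  have hc : 0 < δ*r/2 := by positivity
  have hi0 : IntegrableOn (fun u : ℝ => Real.exp (-(δ*r/2) * (u + u⁻¹))) (Ioi 0) := integ0 hc
  have hi2 : IntegrableOn (fun u : ℝ => Real.exp (-(δ*r/2) * (u + u⁻¹)) * (u^2)⁻¹) (Ioi 0) :=
    integ2 hc
  rw [MeasureTheory.integral_add (hi0.const_mul _) (hi2.const_mul _),
    MeasureTheory.integral_const_mul, MeasureTheory.integral_const_mul]
  have hK : besselK1 (δ * r) = (1/2) * ∫ u in Ioi (0:ℝ),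
      Real.exp (-(δ*r/2) * (u + u⁻¹)) * (u^2)⁻¹ := besselK1_eq (δ*r)
  have h2K : ∫ u in Ioi (0:ℝ), Real.exp (-(δ*r/2) * (u + u⁻¹)) * (u^2)⁻¹
      = 2 * besselK1 (δ * r) := by rw [hK]; ring
  have h0K : ∫ u in Ioi (0:ℝ), Real.exp (-(δ*r/2) * (u + u⁻¹))
      = 2 * besselK1 (δ * r) := by rw [← kernel_symm hc, h2K]
  rw [h2K, h0K]
  field_simp
  ring

lemma besselK1_pos {x : ℝ} (hx : 0 < x) : 0 < besselK1 x := by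
  rw [besselK1_eq]
  have hc : 0 < x/2 := by linarith
  have hi := integ2 hc
  have hnn : 0 ≤ᶠ[ae (volume.restrict (Ioi (0:ℝ)))]
      fun u : ℝ => Real.exp (-(x/2) * (u + u⁻¹)) * (u^2)⁻¹ := by
    filter_upwards [ae_restrict_mem measurableSet_Ioi] with u hu
    positivity
  have hpos : 0 < ∫ u in Ioi (0:ℝ), Real.exp (-(x/2) * (u + u⁻¹)) * (u^2)⁻¹ := by
    rw [setIntegral_pos_iff_support_of_nonneg_ae hnn hi]
    have hsub : Ioi (0:ℝ) ⊆
        Function.support (fun u : ℝ => Real.exp (-(x/2) * (u + u⁻¹)) * (u^2)⁻¹) := by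
      intro u hu
      have hu0 : (0:ℝ) < u := hu
      have h : 0 < Real.exp (-(x/2)*(u+u⁻¹)) * (u^2)⁻¹ := by positivity
      exact ne_of_gt h
    have h1 : Function.support (fun u : ℝ => Real.exp (-(x/2) * (u + u⁻¹)) * (u^2)⁻¹)
        ∩ Ioi 0 = Ioi (0:ℝ) := inter_eq_self_of_subset_right hsub
    rw [h1]
    simp [Real.volume_Ioi]
  linarith

theorem renyi_hyperbolic (γ β δ μ : ℝ) (hβ : |β| < γ) (hδ : 0 < δ) :
    ∀ α : ℝ, 0 < α →
      ((∫ x : ℝ,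
        ((Real.sqrt (γ^2 - β^2) / (2 * γ * δ * besselK1 (δ * Real.sqrt (γ^2 - β^2)))) *
          Real.exp (-γ * Real.sqrt (δ^2 + (x - μ)^2) + β * (x - μ))) ^ α) =
        (Real.sqrt (γ^2 - β^2) / (2 * γ * δ)) ^ (α - 1) *
          besselK1 (α * δ * Real.sqrt (γ^2 - β^2)) /
            besselK1 (δ * Real.sqrt (γ^2 - β^2)) ^ α)
      ∧ (α ≠ 1 →
        (1 / (1 - α)) * Real.log (∫ x : ℝ,
          ((Real.sqrt (γ^2 - β^2) / (2 * γ * δ * besselK1 (δ * Real.sqrt (γ^2 - β^2)))) *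
            Real.exp (-γ * Real.sqrt (δ^2 + (x - μ)^2) + β * (x - μ))) ^ α) =
        -Real.log (Real.sqrt (γ^2 - β^2) / (2 * γ * δ)) +
          (1 / (1 - α)) * Real.log
            (besselK1 (α * δ * Real.sqrt (γ^2 - β^2)) /
              besselK1 (δ * Real.sqrt (γ^2 - β^2)) ^ α)) := by
  intro α hα
  have hγ : 0 < γ := lt_of_le_of_lt (abs_nonneg β) hβ
  have hγβ : 0 < γ^2 - β^2 := by
    obtain ⟨h1, h2⟩ := abs_lt.1 hβ
    nlinarith
  set d : ℝ := Real.sqrt (γ^2 - β^2) with hddef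
  have hd : 0 < d := Real.sqrt_pos.2 hγβ
  set K : ℝ := besselK1 (δ * d) with hKdef
  have hK : 0 < K := besselK1_pos (by positivity)
  set Kα : ℝ := besselK1 (α * δ * d) with hKadef
  have hKα : 0 < Kα := besselK1_pos (by positivity)
  set A : ℝ := d / (2 * γ * δ) with hAdef
  have hA : 0 < A := by positivity
  have hpart1 : (∫ x : ℝ,
      ((d / (2 * γ * δ * K)) *
        Real.exp (-γ * Real.sqrt (δ^2 + (x - μ)^2) + β * (x - μ))) ^ α) =
      A ^ (α - 1) * Kα / K ^ α := by
    have hC : 0 < d / (2 * γ * δ * K) := by positivity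
    have hstep1 : ∀ x : ℝ,
        ((d / (2 * γ * δ * K)) *
          Real.exp (-γ * Real.sqrt (δ^2 + (x - μ)^2) + β * (x - μ))) ^ α
        = (d / (2 * γ * δ * K)) ^ α *
          Real.exp (-(α*γ) * Real.sqrt (δ^2 + (x - μ)^2) + (α*β) * (x - μ)) := by
      intro x
      rw [Real.mul_rpow hC.le (Real.exp_pos _).le, ← Real.exp_mul]
      congr 2
      ring
    simp only [hstep1]
    rw [MeasureTheory.integral_const_mul]
    have htrans : (∫ x : ℝ,
        Real.exp (-(α*γ) * Real.sqrt (δ^2 + (x - μ)^2) + (α*β) * (x - μ)))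
        = ∫ y : ℝ, Real.exp (-(α*γ) * Real.sqrt (δ^2 + y^2) + (α*β) * y) := by
      exact MeasureTheory.integral_sub_right_eq_self
        (fun y => Real.exp (-(α*γ) * Real.sqrt (δ^2 + y^2) + (α*β) * y)) μ
    rw [htrans]
    have hab : |α*β| < α*γ := by
      rw [abs_mul, abs_of_pos hα]
      exact mul_lt_mul_of_pos_left hβ hα
    rw [hyperbolic_integral hab hδ]
    have hsq : (α*γ)^2 - (α*β)^2 = α^2 * (γ^2 - β^2) := by ring
    have hs : Real.sqrt ((α*γ)^2 - (α*β)^2) = α * d := by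
      rw [hsq, Real.sqrt_mul (sq_nonneg α), Real.sqrt_sq hα.le]
    rw [hs, show δ * (α * d) = α * δ * d by ring]
    rw [show d / (2 * γ * δ * K) = A / K by rw [hAdef, div_div]]
    rw [Real.div_rpow hA.le hK.le, Real.rpow_sub hA, Real.rpow_one]
    have hαne : α ≠ 0 := ne_of_gt hα
    have hdne : d ≠ 0 := ne_of_gt hd
    have hKne : K ≠ 0 := ne_of_gt hK
    have hAne : A ≠ 0 := ne_of_gt hA
    have hKαr : (0:ℝ) < K ^ α := Real.rpow_pos_of_pos hK α
    field_simp
    rw [hAdef]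
    field_simp
    ring
    rw [hKadef]; ring_nf
  refine ⟨hpart1, ?_⟩
  intro hα1
  rw [hpart1]
  have h1α : (1:ℝ) - α ≠ 0 := by
    intro h
    apply hα1
    linarith
  have hKαr : (0:ℝ) < K ^ α := Real.rpow_pos_of_pos hK α
  have hAr : (0:ℝ) < A ^ (α-1) := Real.rpow_pos_of_pos hA _
  rw [mul_div_assoc, Real.log_mul (ne_of_gt hAr) (ne_of_gt (div_pos hKα hKαr)),
    Real.log_rpow hA]
  field_simp
  ring
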